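/- Let ε ∈ (0, 1/8), let k and s be integers with k ≥ 2 and s ≥ 2, let p = (1/8)·ln(min(k, s)), and assume 2p + ln(2p) < 3p. Let j and r′ be positive integers with r′ ≤ j ≤ 2p and j < s. Let F be a family of finite sets, each of cardinality at most s, such that for every nonempty finite set S with |S| < s, the number of U ∈ F with S ⊆ U is at most Φ₂(s − |S|). Let B′ be a finite set with |B′| ≤ r′·s, and let H be a finite subfamily of {U ∈ F : |U ∩ B′| = j} with |H| > s^j · Φ₂(s − j) · e^{−4p}. Then for every v ∈ B′, the number of U ∈ H containing v is at most (e^{7p}/s)·|H|. -/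

import Mathlib

/-- `p_j`: equals `ε` for `j = 1` (and `j = 0`) and `ε · ln (min j k)` for `j ≥ 2`. -/
noncomputable def pstep (ε : ℝ) (k : ℕ) (j : ℕ) : ℝ :=
  if j ≤ 1 then ε else ε * Real.log (min (j : ℝ) (k : ℝ))

/-- `Φ₂(s) = k^s · s! / (p₁ p₂ ⋯ p_s)`. -/
noncomputable def Phi2 (ε : ℝ) (k : ℕ) (s : ℕ) : ℝ :=
  ((k : ℝ) ^ s * (Nat.factorial s : ℝ)) / ∏ j ∈ Finset.Icc 1 s, pstep ε k j

lemma pstep_pos (ε : ℝ) (hε0 : 0 < ε) (k : ℕ) (hk : 2 ≤ k) (j : ℕ) :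
    0 < pstep ε k j := by
  unfold pstep
  split
  · exact hε0
  · rename_i h
    push_neg at h
    apply mul_pos hε0
    apply Real.log_pos
    rw [lt_min_iff]
    constructor
    · exact_mod_cast h
    · exact_mod_cast hk

lemma Phi2_nonneg (ε : ℝ) (hε0 : 0 < ε) (k : ℕ) (hk : 2 ≤ k) (s : ℕ) :
    0 ≤ Phi2 ε k s := by
  unfold Phi2
  apply div_nonneg
  · positivity
  · exact le_of_lt (Finset.prod_pos fun j _ => pstep_pos ε hε0 k hk j)

/-- For `v ∈ B′`, the number of `U ∈ H` containing `v` is at most `(e^{7p}/s)·|H|`. -/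
theorem statement14 (α : Type*) [DecidableEq α] (ε : ℝ) (hε0 : 0 < ε) (hε : ε < 1 / 8)
    (k s : ℕ) (hk : 2 ≤ k) (hs : 2 ≤ s)
    (p : ℝ) (hp : p = 1 / 8 * Real.log (min (k : ℝ) (s : ℝ)))
    (hln : 2 * p + Real.log (2 * p) < 3 * p)
    (j r' : ℕ) (hj : 0 < j) (hr' : 0 < r') (hr'j : r' ≤ j)
    (hj2p : (j : ℝ) ≤ 2 * p) (hjs : j < s)
    (F : Finset (Finset α)) (hcard : ∀ U ∈ F, U.card ≤ s)
    (hsup : ∀ S : Finset α, S.Nonempty → S.card < s →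
      ((F.filter fun U => S ⊆ U).card : ℝ) ≤ Phi2 ε k (s - S.card))
    (B' : Finset α) (hB' : B'.card ≤ r' * s)
    (H : Finset (Finset α)) (hH : H ⊆ F.filter fun U => (U ∩ B').card = j)
    (hHcard : (s : ℝ) ^ j * Phi2 ε k (s - j) * Real.exp (-(4 * p)) < (H.card : ℝ)) :
    ∀ v ∈ B', ((H.filter fun U => v ∈ U).card : ℝ) ≤
      Real.exp (7 * p) / (s : ℝ) * (H.card : ℝ) := by
  intro v hv
  have hs0 : (0:ℝ) < (s:ℝ) := by positivity
  have hp0 : (0:ℝ) < p := by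
    rw [hp]
    have : (1:ℝ) < min (k : ℝ) (s : ℝ) := by
      rw [lt_min_iff]
      constructor
      · exact_mod_cast lt_of_lt_of_le one_lt_two hk
      · exact_mod_cast lt_of_lt_of_le one_lt_two hs
    have := Real.log_pos this
    linarith
  have hPhi : 0 ≤ Phi2 ε k (s - j) := Phi2_nonneg ε hε0 k hk _
  -- covering step
  have hsub : H.filter (fun U => v ∈ U) ⊆
      ((B'.erase v).powersetCard (j-1)).biUnion
        (fun T => F.filter fun U => insert v T ⊆ U) := by
    intro U hU
    rw [Finset.mem_filter] at hU
    obtain ⟨hUH, hvU⟩ := hU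
    have hUF := hH hUH
    rw [Finset.mem_filter] at hUF
    obtain ⟨hUF, hUB⟩ := hUF
    have hvUB : v ∈ U ∩ B' := Finset.mem_inter.mpr ⟨hvU, hv⟩
    refine Finset.mem_biUnion.mpr ⟨(U ∩ B').erase v, ?_, ?_⟩
    · rw [Finset.mem_powersetCard]
      constructor
      · intro x hx
        rw [Finset.mem_erase] at hx ⊢
        exact ⟨hx.1, (Finset.mem_inter.mp hx.2).2⟩
      · rw [Finset.card_erase_of_mem hvUB, hUB]
    · rw [Finset.mem_filter]
      refine ⟨hUF, ?_⟩
      rw [Finset.insert_erase hvUB]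
      exact Finset.inter_subset_left
  have hTcard : ∀ T ∈ (B'.erase v).powersetCard (j-1),
      ((F.filter fun U => insert v T ⊆ U).card : ℝ) ≤ Phi2 ε k (s - j) := by
    intro T hT
    rw [Finset.mem_powersetCard] at hT
    have hvT : v ∉ T := fun h => (Finset.mem_erase.mp (hT.1 h)).1 rfl
    have hcardT : (insert v T).card = j := by
      rw [Finset.card_insert_of_notMem hvT, hT.2, Nat.sub_add_cancel hj]
    have := hsup (insert v T) ⟨v, Finset.mem_insert_self v T⟩ (by rw [hcardT]; exact hjs)
    rwa [hcardT] at this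
  have hcount : ((H.filter fun U => v ∈ U).card : ℝ) ≤
      (((B'.erase v).card.choose (j-1) : ℝ)) * Phi2 ε k (s - j) := by
    calc ((H.filter fun U => v ∈ U).card : ℝ)
        ≤ ((((B'.erase v).powersetCard (j-1)).biUnion
            (fun T => F.filter fun U => insert v T ⊆ U)).card : ℝ) := by
          exact_mod_cast Finset.card_le_card hsub
      _ ≤ ∑ T ∈ (B'.erase v).powersetCard (j-1),
            ((F.filter fun U => insert v T ⊆ U).card : ℝ) := by
          exact_mod_cast Finset.card_biUnion_le
      _ ≤ ∑ T ∈ (B'.erase v).powersetCard (j-1), Phi2 ε k (s - j) :=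
          Finset.sum_le_sum hTcard
      _ = (((B'.erase v).powersetCard (j-1)).card : ℝ) * Phi2 ε k (s - j) := by
          rw [Finset.sum_const, nsmul_eq_mul]
      _ = (((B'.erase v).card.choose (j-1) : ℝ)) * Phi2 ε k (s - j) := by
          rw [Finset.card_powersetCard]
  -- bound the binomial coefficient
  have hchoose : (((B'.erase v).card.choose (j-1) : ℝ)) ≤
      Real.exp (2*p) * (s:ℝ)^(j-1) := by
    calc (((B'.erase v).card.choose (j-1) : ℝ)) ≤ (((r'*s).choose (j-1) : ℝ)) := by
          have h1 : (B'.erase v).card ≤ r' * s :=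
            le_trans (le_trans (Finset.card_erase_le) hB') (le_refl _)
          exact_mod_cast Nat.choose_le_choose (j-1) h1
      _ ≤ ((r'*s : ℕ) : ℝ)^(j-1) / (Nat.factorial (j-1) : ℝ) :=
          Nat.choose_le_pow_div (j-1) (r'*s)
      _ ≤ (2*p*(s:ℝ))^(j-1) / (Nat.factorial (j-1) : ℝ) := by
          apply div_le_div_of_nonneg_right ?_ (by positivity)
          · apply pow_le_pow_left₀ (by positivity)
            push_cast
            have hr'2p : (r' : ℝ) ≤ 2*p := le_trans (by exact_mod_cast hr'j) hj2p
            nlinarith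
      _ = (2*p)^(j-1) / (Nat.factorial (j-1) : ℝ) * (s:ℝ)^(j-1) := by
          rw [mul_pow]; ring
      _ ≤ Real.exp (2*p) * (s:ℝ)^(j-1) := by
          have h2 := Real.pow_div_factorial_le_exp (x := 2*p) (by positivity) (j-1)
          exact mul_le_mul_of_nonneg_right h2 (by positivity)
  -- combine
  have hmain : ((H.filter fun U => v ∈ U).card : ℝ) ≤
      Real.exp (7*p) / (s:ℝ) * ((s : ℝ) ^ j * Phi2 ε k (s - j) * Real.exp (-(4 * p))) := by
    have hsj : (s:ℝ)^j = (s:ℝ)^(j-1) * (s:ℝ) := by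
      have h1 : j - 1 + 1 = j := by omega
      nth_rewrite 1 [← h1]
      rw [pow_succ]
    calc ((H.filter fun U => v ∈ U).card : ℝ)
        ≤ (((B'.erase v).card.choose (j-1) : ℝ)) * Phi2 ε k (s - j) := hcount
      _ ≤ Real.exp (2*p) * (s:ℝ)^(j-1) * Phi2 ε k (s - j) :=
          mul_le_mul_of_nonneg_right hchoose hPhi
      _ ≤ Real.exp (3*p) * (s:ℝ)^(j-1) * Phi2 ε k (s - j) := by
          have hee : Real.exp (2*p) ≤ Real.exp (3*p) := Real.exp_le_exp.mpr (by linarith)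
          exact mul_le_mul_of_nonneg_right
            (mul_le_mul_of_nonneg_right hee (by positivity)) hPhi
      _ = Real.exp (7*p) / (s:ℝ) * ((s : ℝ) ^ j * Phi2 ε k (s - j) * Real.exp (-(4 * p))) := by
          have he : Real.exp (3*p) = Real.exp (7*p) * Real.exp (-(4*p)) := by
            rw [← Real.exp_add]; ring_nf
          rw [hsj, he]
          field_simp
  refine le_trans hmain ?_
  apply le_of_lt
  apply mul_lt_mul_of_pos_left hHcard
  positivity
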